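/- (Downward energy transfer for Lorenz '96.) Let x ∈ ℝ^d, x ≠ 0, and suppose for some j (mod d) there are constants c₁ > c₂ > 0 with |x_j| ≥ c₁|x| and |x_{j−1}| ≤ c₂ h |x|, and |x_{j−2}| ≥ c₃ > 0. Let τ ~ Exp(1/h) with h ∈ (0, h*] where h* < π/12 satisfies the smallness conditions of the paper. Then with probability at least e^{−3/c₃}/2, the flow along V_{j−1} satisfies |π_{j−1}(φ_τ^{j−1}(x))| ≥ (c₁ − c₂) h |x| = (c₁ − c₂) h |φ_τ^{j−1}(x)|. -/

import Mathlib

open Real MeasureTheory ProbabilityTheory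
open scoped ENNReal NNReal

/-- The Euclidean norm of a vector indexed by `ZMod d`. -/
noncomputable def zNorm {d : ℕ} [NeZero d] (x : ZMod d → ℝ) : ℝ :=
  Real.sqrt (∑ i, x i ^ 2)

/-- The flow of the Lorenz '96 vector field
`V_{j-1}(x) = x_j x_{j-2} e_{j-1} − x_{j-1} x_{j-2} e_j`: a rotation in the
`(x_{j-1}, x_j)`-plane with angular speed `|x_{j-2}|`. -/
noncomputable def lorenzRotFlow {d : ℕ} [NeZero d] (j : ZMod d) (t : ℝ)
    (x : ZMod d → ℝ) : ZMod d → ℝ := fun i =>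
  if i = j - 1 then
    x (j - 1) * Real.cos (|x (j - 2)| * t)
      + Real.sign (x (j - 2)) * x j * Real.sin (|x (j - 2)| * t)
  else if i = j then
    x j * Real.cos (|x (j - 2)| * t)
      - Real.sign (x (j - 2)) * x (j - 1) * Real.sin (|x (j - 2)| * t)
  else x i

/-- The exponential measure of `Iic b`. -/
lemma expMeasure_Iic (h : ℝ) (hh : 0 < h) (b : ℝ) :
    expMeasure (1 / h) (Set.Iic b)
      = ENNReal.ofReal (if 0 ≤ b then 1 - Real.exp (-(1 / h * b)) else 0) := by
  have hr : 0 < 1 / h := by positivity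
  have hlint := lintegral_exponentialPDF_eq_antiDeriv (r := 1 / h) hr b
  show (gammaMeasure 1 (1 / h)) (Set.Iic b) = _
  rw [gammaMeasure, withDensity_apply _ measurableSet_Iic]
  exact hlint

/-- The exponential measure of an interval `Ioo a b` with `0 ≤ a`. -/
lemma expMeasure_Ioo_le (h a b : ℝ) (hh : 0 < h) (ha : 0 ≤ a) :
    expMeasure (1 / h) (Set.Ioo a b)
      ≤ ENNReal.ofReal (Real.exp (-(1 / h * a)) - Real.exp (-(1 / h * b))) := by
  have hr : (0:ℝ) < 1 / h := by positivity
  rcases le_or_gt b a with hba | hab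
  · rw [Set.Ioo_eq_empty (by exact fun hlt => absurd hlt (not_lt.2 hba)), measure_empty]
    exact zero_le
  · have hb : 0 ≤ b := le_trans ha hab.le
    have hdisj : Disjoint (Set.Iic a) (Set.Ioo a b) :=
      (Set.Iic_disjoint_Ioi le_rfl).mono_right Set.Ioo_subset_Ioi_self
    have hunion : expMeasure (1 / h) (Set.Iic a) + expMeasure (1 / h) (Set.Ioo a b)
        ≤ expMeasure (1 / h) (Set.Iic b) := by
      rw [← measure_union hdisj measurableSet_Ioo]
      apply measure_mono
      intro y hy
      rcases hy with hy | hy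
      · exact le_trans hy hab.le
      · exact hy.2.le
    rw [expMeasure_Iic h hh a, expMeasure_Iic h hh b, if_pos ha, if_pos hb] at hunion
    have hmono : 0 ≤ Real.exp (-(1 / h * a)) - Real.exp (-(1 / h * b)) := by
      rw [sub_nonneg]
      apply Real.exp_le_exp.2
      have : 1 / h * a ≤ 1 / h * b := mul_le_mul_of_nonneg_left hab.le hr.le
      linarith
    have hea : Real.exp (-(1 / h * a)) ≤ 1 := by
      apply Real.exp_le_one_iff.2
      have : 0 ≤ 1 / h * a := mul_nonneg hr.le ha
      linarith
    have hsplit : ENNReal.ofReal (1 - Real.exp (-(1 / h * b)))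
        = ENNReal.ofReal (1 - Real.exp (-(1 / h * a)))
          + ENNReal.ofReal (Real.exp (-(1 / h * a)) - Real.exp (-(1 / h * b))) := by
      rw [← ENNReal.ofReal_add (by linarith) (by linarith)]
      ring_nf
    rw [hsplit] at hunion
    exact (ENNReal.add_le_add_iff_left ENNReal.ofReal_ne_top).1 hunion

/-- Summing a geometric family of interval bounds. -/
lemma tsum_geom_bound (a C q : ℝ) (hC : 0 ≤ C) (hq0 : 0 < q) (hq1 : q < 1) :
    (∑' k : ℕ, (if k = 0 then ENNReal.ofReal a else ENNReal.ofReal (C * q ^ k)))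
      ≤ ENNReal.ofReal a + ENNReal.ofReal (C * q * (1 - q)⁻¹) := by
  rw [ENNReal.tsum_eq_add_tsum_ite 0]
  refine add_le_add (by simp) ?_
  have he : ∀ k : ℕ, (@ite ℝ≥0∞ (k = 0) (Classical.propDecidable _) 0
      (if k = 0 then ENNReal.ofReal a else ENNReal.ofReal (C * q ^ k)))
      = ENNReal.ofReal (if k = 0 then 0 else C * q ^ k) := by
    intro k; by_cases hk : k = 0 <;> simp [hk]
  refine le_trans (le_of_eq (tsum_congr he)) ?_
  have hg : Summable (fun k : ℕ => C * q ^ k) :=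
    (summable_geometric_of_lt_one hq0.le hq1).mul_left _
  have hnn : ∀ k : ℕ, 0 ≤ (if k = 0 then (0:ℝ) else C * q ^ k) := by
    intro k; by_cases hk : k = 0 <;> simp [hk] <;> positivity
  have hsummable : Summable (fun k : ℕ => if k = 0 then (0:ℝ) else C * q ^ k) := by
    refine Summable.of_nonneg_of_le hnn (fun k => ?_) hg
    by_cases hk : k = 0 <;> simp [hk] <;> positivity
  rw [← ENNReal.ofReal_tsum_of_nonneg hnn hsummable]
  apply ENNReal.ofReal_le_ofReal
  rw [Summable.tsum_eq_zero_add hsummable]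
  simp only [if_pos rfl, zero_add]
  have he2 : ∀ k : ℕ, (if k + 1 = 0 then (0:ℝ) else C * q ^ (k + 1)) = (C * q) * q ^ k := by
    intro k
    rw [if_neg (Nat.succ_ne_zero k)]
    ring
  rw [tsum_congr he2, tsum_mul_left, tsum_geometric_of_lt_one hq0.le hq1]
  simp

/-- Convexity inequality: for `0 ≤ λ ≤ 1`, `exp (λ A) - 1 ≤ λ (exp A - 1)`. -/
lemma exp_convex_bound (lam A : ℝ) (h0 : 0 ≤ lam) (h1 : lam ≤ 1) :
    Real.exp (lam * A) - 1 ≤ lam * (Real.exp A - 1) := by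
  have := convexOn_exp.2 (Set.mem_univ A) (Set.mem_univ (0 : ℝ))
    (show (0:ℝ) ≤ lam from h0) (show (0:ℝ) ≤ 1 - lam by linarith)
    (show lam + (1 - lam) = 1 by ring)
  simp only [smul_eq_mul, mul_zero, add_zero, Real.exp_zero, mul_one] at this
  linarith

/-- The key real inequality. -/
lemma key_real_ineq (h ω c₃ : ℝ) (hh : 0 < h) (hhπ : h < Real.pi / 12)
    (hc₃ : 0 < c₃) (hω : c₃ ≤ ω) :
    Real.exp (-3 / c₃) / 2 + ((1 - Real.exp (-(3 / ω)))
      + (Real.exp (3 / ω) - Real.exp (-(3 / ω))) * Real.exp (-(Real.pi / (ω * h)))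
        * (1 - Real.exp (-(Real.pi / (ω * h))))⁻¹) ≤ 1 := by
  have hπ : (0:ℝ) < Real.pi := Real.pi_pos
  have hω0 : 0 < ω := lt_of_lt_of_le hc₃ hω
  set A : ℝ := Real.pi / (ω * h) with hAdef
  have hA0 : 0 < A := by positivity
  set q : ℝ := Real.exp (-A) with hqdef
  have hq0 : 0 < q := Real.exp_pos _
  have hq1 : q < 1 := by
    rw [hqdef, Real.exp_lt_one_iff]
    linarith
  set C : ℝ := Real.exp (3 / ω) - Real.exp (-(3 / ω)) with hCdef
  have hcω : Real.exp (-3 / c₃) ≤ Real.exp (-(3 / ω)) := by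
    apply Real.exp_le_exp.2
    rw [neg_div]
    have : 3 / ω ≤ 3 / c₃ := div_le_div_of_nonneg_left (by norm_num) hc₃ hω
    linarith
  have hqA : Real.exp A * q = 1 := by
    rw [hqdef, ← Real.exp_add]
    simp
  have hlam0 : (0:ℝ) ≤ 6 * h / Real.pi := by positivity
  have hlam1 : 6 * h / Real.pi ≤ 1 / 2 := by
    rw [div_le_div_iff₀ hπ (by norm_num)]
    linarith
  have hlamA : (6 * h / Real.pi) * A = 6 / ω := by
    rw [hAdef]; field_simp
  have hconv : Real.exp (6 / ω) - 1 ≤ (6 * h / Real.pi) * (Real.exp A - 1) := by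
    have := exp_convex_bound (6 * h / Real.pi) A hlam0 (by linarith)
    rwa [hlamA] at this
  have hexpA1 : (1:ℝ) ≤ Real.exp A := Real.one_le_exp hA0.le
  have hCq : C * q * (1 - q)⁻¹ ≤ Real.exp (-(3 / ω)) / 2 := by
    rw [mul_inv_le_iff₀ (by linarith)]
    have hCrw : C = Real.exp (-(3 / ω)) * (Real.exp (6 / ω) - 1) := by
      rw [hCdef, mul_sub, ← Real.exp_add, mul_one,
        show -(3 / ω) + 6 / ω = 3 / ω by ring]
    rw [hCrw]
    have h6 : (Real.exp (6 / ω) - 1) * q ≤ (1 / 2) * (1 - q) := by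
      have h7 : (Real.exp (6 / ω) - 1) * q ≤ (1 / 2) * (Real.exp A - 1) * q := by
        apply mul_le_mul_of_nonneg_right _ hq0.le
        nlinarith
      have h8 : (Real.exp A - 1) * q = 1 - q := by
        rw [sub_mul, hqA, one_mul]
      nlinarith [h7, h8]
    have hE : 0 < Real.exp (-(3 / ω)) := Real.exp_pos _
    nlinarith [h6, hE]
  nlinarith [hcω, hCq]

set_option maxHeartbeats 1000000 in
theorem lorenz_downward_transfer (d : ℕ) [NeZero d] (hd : 4 ≤ d)
    (h : ℝ) (hh : 0 < h) (hhπ : h < Real.pi / 12)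
    (hsin : ∀ y : ℝ, 0 ≤ y → |Real.sin y| ≤ h → ∃ k : ℕ, |y - k * Real.pi| < 3 * h)
    (hexp6 : Real.exp (-6 * h) ≥ 3 / 4)
    (hexp5 : 1 - Real.exp (-5 * h) - 3 * h * Real.exp (-5 * h) ≥ h)
    (x : ZMod d → ℝ) (hx : x ≠ 0) (j : ZMod d)
    (c₁ c₂ c₃ : ℝ) (hc : c₁ > c₂) (hc₂ : c₂ > 0) (hc₃ : c₃ > 0)
    (hxj : |x j| ≥ c₁ * zNorm x)
    (hxjm1 : |x (j - 1)| ≤ c₂ * h * zNorm x)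
    (hxjm2 : |x (j - 2)| ≥ c₃) :
    (∀ t : ℝ, zNorm (lorenzRotFlow j t x) = zNorm x) ∧
    ENNReal.ofReal (Real.exp (-3 / c₃) / 2) ≤
      expMeasure (1 / h)
        {t : ℝ | (c₁ - c₂) * h * zNorm x ≤ |lorenzRotFlow j t x (j - 1)|} := by
  classical
  haveI : Fact (1 < d) := ⟨by omega⟩
  have hπ : (0:ℝ) < Real.pi := Real.pi_pos
  set ω : ℝ := |x (j - 2)| with hωdef
  set s : ℝ := Real.sign (x (j - 2)) with hsdef
  have hω0 : 0 < ω := lt_of_lt_of_le hc₃ hxjm2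
  have hxjm2ne : x (j - 2) ≠ 0 := by
    intro h0
    rw [hωdef, h0, abs_zero] at hω0
    exact lt_irrefl _ hω0
  have hs2 : s ^ 2 = 1 := by
    rcases lt_or_gt_of_ne hxjm2ne with hneg | hpos
    · rw [hsdef, Real.sign_of_neg hneg]; norm_num
    · rw [hsdef, Real.sign_of_pos hpos]; norm_num
  have hne : (j : ZMod d) - 1 ≠ j := by
    intro hcontra
    have h10 : (1 : ZMod d) = 0 := sub_eq_self.mp hcontra
    exact one_ne_zero h10
  have hflow1 : ∀ t : ℝ, lorenzRotFlow j t x (j - 1)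
      = x (j - 1) * Real.cos (ω * t) + s * x j * Real.sin (ω * t) := by
    intro t
    simp [lorenzRotFlow, ← hωdef, ← hsdef]
  have hflow2 : ∀ t : ℝ, lorenzRotFlow j t x j
      = x j * Real.cos (ω * t) - s * x (j - 1) * Real.sin (ω * t) := by
    intro t
    simp [lorenzRotFlow, Ne.symm hne, ← hωdef, ← hsdef]
  have hflowo : ∀ (t : ℝ) (i : ZMod d), i ≠ j - 1 → i ≠ j → lorenzRotFlow j t x i = x i := by
    intro t i h1 h2
    simp only [lorenzRotFlow, if_neg h1, if_neg h2]
  -- Part 1: norm conservation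
  have hnorm : ∀ t : ℝ, zNorm (lorenzRotFlow j t x) = zNorm x := by
    intro t
    have hmem : j - 1 ∈ Finset.univ.erase j := Finset.mem_erase.2 ⟨hne, Finset.mem_univ _⟩
    have hsum : ∑ i, (lorenzRotFlow j t x i) ^ 2 = ∑ i, x i ^ 2 := by
      rw [← Finset.sum_erase_add Finset.univ (fun i => (lorenzRotFlow j t x i) ^ 2)
            (Finset.mem_univ j),
          ← Finset.sum_erase_add _ (fun i => (lorenzRotFlow j t x i) ^ 2) hmem,
          ← Finset.sum_erase_add Finset.univ (fun i => x i ^ 2) (Finset.mem_univ j),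
          ← Finset.sum_erase_add _ (fun i => x i ^ 2) hmem]
      have hrest : ∑ i ∈ (Finset.univ.erase j).erase (j - 1), (lorenzRotFlow j t x i) ^ 2
          = ∑ i ∈ (Finset.univ.erase j).erase (j - 1), x i ^ 2 := by
        refine Finset.sum_congr rfl fun i hi => ?_
        rw [Finset.mem_erase] at hi
        obtain ⟨hi1, hi2⟩ := hi
        rw [Finset.mem_erase] at hi2
        rw [hflowo t i hi1 hi2.1]
      rw [hrest, hflow1 t, hflow2 t]
      have hpy := Real.sin_sq_add_cos_sq (ω * t)
      linear_combination (x (j - 1) ^ 2 + x j ^ 2) * Real.sin (ω * t) ^ 2 * hs2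
        + (x (j - 1) ^ 2 + x j ^ 2) * hpy
    unfold zNorm
    rw [hsum]
  refine ⟨hnorm, ?_⟩
  -- Part 2: the probability bound
  set N : ℝ := zNorm x with hNdef
  have hN0 : 0 ≤ N := Real.sqrt_nonneg _
  have hr : (0:ℝ) < 1 / h := by positivity
  haveI : IsProbabilityMeasure (expMeasure (1 / h)) := isProbabilityMeasure_expMeasure hr
  set S : Set ℝ := {t : ℝ | (c₁ - c₂) * h * N ≤ |lorenzRotFlow j t x (j - 1)|} with hSdef
  have habs : ∀ t : ℝ, |lorenzRotFlow j t x (j - 1)|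
      = |x (j - 1) * Real.cos (ω * t) + s * x j * Real.sin (ω * t)| := fun t => by
    rw [hflow1 t]
  -- S is measurable
  have hScont : Continuous fun t : ℝ =>
      |x (j - 1) * Real.cos (ω * t) + s * x j * Real.sin (ω * t)| := by
    fun_prop
  have hSmeas : MeasurableSet S := by
    have hSeq : S = {t : ℝ | (c₁ - c₂) * h * N
        ≤ |x (j - 1) * Real.cos (ω * t) + s * x j * Real.sin (ω * t)|} := by
      ext t; simp only [hSdef, Set.mem_setOf_eq, habs t]
    rw [hSeq]
    exact measurableSet_le measurable_const hScont.measurable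
  -- if |sin (ω t)| ≥ h then t ∈ S
  have hgood : ∀ t : ℝ, h ≤ |Real.sin (ω * t)| → t ∈ S := by
    intro t hst
    have habs_s : |s| = 1 := by
      rcases lt_or_gt_of_ne hxjm2ne with hneg | hpos
      · rw [hsdef, Real.sign_of_neg hneg]; norm_num
      · rw [hsdef, Real.sign_of_pos hpos]; norm_num
    set u := x (j - 1) * Real.cos (ω * t) with hu
    set v := s * x j * Real.sin (ω * t) with hv
    have h1 : |v| ≤ |u + v| + |u| := by
      have h2 := abs_add_le (u + v) (-u)
      simpa using h2
    have hvval : |v| = |x j| * |Real.sin (ω * t)| := by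
      rw [hv, abs_mul, abs_mul, habs_s, one_mul]
    have hvlb : c₁ * N * h ≤ |v| := by
      rw [hvval]
      exact mul_le_mul hxj hst hh.le (abs_nonneg _)
    have huub : |u| ≤ c₂ * h * N := by
      rw [hu, abs_mul]
      calc |x (j - 1)| * |Real.cos (ω * t)| ≤ |x (j - 1)| * 1 :=
            mul_le_mul_of_nonneg_left (abs_cos_le_one _) (abs_nonneg _)
        _ = |x (j - 1)| := mul_one _
        _ ≤ c₂ * h * N := hxjm1
    show (c₁ - c₂) * h * N ≤ |lorenzRotFlow j t x (j - 1)|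
    rw [habs t, ← hu, ← hv]
    nlinarith [h1, hvlb, huub]
  -- the bad set is covered by small intervals
  have hcover : Sᶜ ⊆ Set.Iio 0 ∪
      ⋃ k : ℕ, Set.Ioo (((k : ℝ) * Real.pi - 3 * h) / ω) (((k : ℝ) * Real.pi + 3 * h) / ω) := by
    intro t ht
    rcases lt_or_ge t 0 with ht0 | ht0
    · exact Or.inl ht0
    · right
      have hsint : |Real.sin (ω * t)| ≤ h := by
        by_contra hcon
        push_neg at hcon
        exact ht (hgood t hcon.le)
      obtain ⟨k, hk⟩ := hsin (ω * t) (mul_nonneg hω0.le ht0) hsint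
      rw [abs_lt] at hk
      refine Set.mem_iUnion.2 ⟨k, ?_⟩
      constructor
      · rw [div_lt_iff₀ hω0]
        nlinarith [hk.1, hk.2]
      · rw [lt_div_iff₀ hω0]
        nlinarith [hk.1, hk.2]
  -- geometric quantities
  have hA0 : 0 < Real.pi / (ω * h) := by positivity
  have hq0 : 0 < Real.exp (-(Real.pi / (ω * h))) := Real.exp_pos _
  have hq1 : Real.exp (-(Real.pi / (ω * h))) < 1 := by
    rw [Real.exp_lt_one_iff]
    linarith
  have hC0 : 0 ≤ Real.exp (3 / ω) - Real.exp (-(3 / ω)) := by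
    rw [sub_nonneg]
    apply Real.exp_le_exp.2
    have : (0:ℝ) ≤ 3 / ω := by positivity
    linarith
  -- bound each interval's measure
  have hGk : ∀ k : ℕ,
      expMeasure (1 / h)
          (Set.Ioo (((k : ℝ) * Real.pi - 3 * h) / ω) (((k : ℝ) * Real.pi + 3 * h) / ω))
        ≤ (if k = 0 then ENNReal.ofReal (1 - Real.exp (-(3 / ω)))
            else ENNReal.ofReal ((Real.exp (3 / ω) - Real.exp (-(3 / ω)))
              * Real.exp (-(Real.pi / (ω * h))) ^ k)) := by
    intro k
    rcases Nat.eq_zero_or_pos k with hk0 | hkpos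
    · subst hk0
      simp only [if_pos rfl]
      calc expMeasure (1 / h)
            (Set.Ioo ((((0:ℕ) : ℝ) * Real.pi - 3 * h) / ω) ((((0:ℕ) : ℝ) * Real.pi + 3 * h) / ω))
          ≤ expMeasure (1 / h) (Set.Iic ((3 * h) / ω)) := by
            apply measure_mono
            intro y hy
            have hy2 := hy.2
            simp only [Nat.cast_zero, zero_mul, zero_add] at hy2
            exact hy2.le
        _ ≤ ENNReal.ofReal (1 - Real.exp (-(3 / ω))) := le_of_eq (by
            rw [expMeasure_Iic h hh]
            rw [if_pos (by positivity)]
            congr 2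
            field_simp)
    · have hk1 : (1 : ℝ) ≤ (k : ℝ) := by exact_mod_cast hkpos
      have ha : 0 ≤ ((k : ℝ) * Real.pi - 3 * h) / ω := by
        apply div_nonneg _ hω0.le
        have := le_mul_of_one_le_left hπ.le hk1
        linarith
      have hb := expMeasure_Ioo_le h _ (((k : ℝ) * Real.pi + 3 * h) / ω) hh ha
      rw [if_neg (Nat.pos_iff_ne_zero.mp hkpos)]
      refine le_trans hb (le_of_eq ?_)
      congr 1
      have e1 : -(1 / h * (((k : ℝ) * Real.pi - 3 * h) / ω))
          = 3 / ω + (k : ℝ) * (-(Real.pi / (ω * h))) := by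
        field_simp; ring
      have e2 : -(1 / h * (((k : ℝ) * Real.pi + 3 * h) / ω))
          = -(3 / ω) + (k : ℝ) * (-(Real.pi / (ω * h))) := by
        field_simp; ring
      rw [e1, e2, Real.exp_add, Real.exp_add, Real.exp_nat_mul]
      ring
  -- sum the bounds
  have hbad : expMeasure (1 / h) Sᶜ
      ≤ ENNReal.ofReal (1 - Real.exp (-(3 / ω)))
        + ENNReal.ofReal ((Real.exp (3 / ω) - Real.exp (-(3 / ω)))
            * Real.exp (-(Real.pi / (ω * h)))
            * (1 - Real.exp (-(Real.pi / (ω * h))))⁻¹) := by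
    have h1 : expMeasure (1 / h) Sᶜ ≤ expMeasure (1 / h) (Set.Iio 0) + ∑' k : ℕ,
        expMeasure (1 / h)
          (Set.Ioo (((k : ℝ) * Real.pi - 3 * h) / ω) (((k : ℝ) * Real.pi + 3 * h) / ω)) := by
      calc expMeasure (1 / h) Sᶜ ≤ expMeasure (1 / h) (Set.Iio 0 ∪ ⋃ k : ℕ,
            Set.Ioo (((k : ℝ) * Real.pi - 3 * h) / ω) (((k : ℝ) * Real.pi + 3 * h) / ω)) :=
          measure_mono hcover
        _ ≤ expMeasure (1 / h) (Set.Iio 0) + expMeasure (1 / h) (⋃ k : ℕ,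
            Set.Ioo (((k : ℝ) * Real.pi - 3 * h) / ω) (((k : ℝ) * Real.pi + 3 * h) / ω)) :=
          measure_union_le _ _
        _ ≤ _ := by gcongr; exact measure_iUnion_le _
    have hIio : expMeasure (1 / h) (Set.Iio 0) = 0 := by
      have h2 : expMeasure (1 / h) (Set.Iio 0) ≤ expMeasure (1 / h) (Set.Iic 0) :=
        measure_mono Set.Iio_subset_Iic_self
      have h3 : expMeasure (1 / h) (Set.Iic 0) = 0 := by
        rw [expMeasure_Iic h hh 0, if_pos le_rfl]
        simp
      exact le_antisymm (h3 ▸ h2) zero_le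
    rw [hIio, zero_add] at h1
    refine le_trans h1 (le_trans (ENNReal.tsum_le_tsum hGk) ?_)
    exact tsum_geom_bound _ _ _ hC0 hq0 hq1
  -- assemble
  have hB0 : 0 ≤ (1 - Real.exp (-(3 / ω)))
      + (Real.exp (3 / ω) - Real.exp (-(3 / ω))) * Real.exp (-(Real.pi / (ω * h)))
        * (1 - Real.exp (-(Real.pi / (ω * h))))⁻¹ := by
    have hb1 : Real.exp (-(3 / ω)) ≤ 1 := by
      apply Real.exp_le_one_iff.2
      have : (0:ℝ) ≤ 3 / ω := by positivity
      linarith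
    have hb2 : 0 ≤ (Real.exp (3 / ω) - Real.exp (-(3 / ω)))
        * Real.exp (-(Real.pi / (ω * h))) * (1 - Real.exp (-(Real.pi / (ω * h))))⁻¹ := by
      apply mul_nonneg (mul_nonneg hC0 hq0.le)
      rw [inv_nonneg]
      linarith
    linarith
  have hkey := key_real_ineq h ω c₃ hh hhπ hc₃ hxjm2
  have hchain : ENNReal.ofReal (Real.exp (-3 / c₃) / 2)
      + (ENNReal.ofReal (1 - Real.exp (-(3 / ω)))
        + ENNReal.ofReal ((Real.exp (3 / ω) - Real.exp (-(3 / ω)))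
            * Real.exp (-(Real.pi / (ω * h)))
            * (1 - Real.exp (-(Real.pi / (ω * h))))⁻¹))
      ≤ expMeasure (1 / h) S
        + (ENNReal.ofReal (1 - Real.exp (-(3 / ω)))
          + ENNReal.ofReal ((Real.exp (3 / ω) - Real.exp (-(3 / ω)))
              * Real.exp (-(Real.pi / (ω * h)))
              * (1 - Real.exp (-(Real.pi / (ω * h))))⁻¹)) := by
    have hb1 : 0 ≤ 1 - Real.exp (-(3 / ω)) := by
      have : Real.exp (-(3 / ω)) ≤ 1 := by
        apply Real.exp_le_one_iff.2
        have : (0:ℝ) ≤ 3 / ω := by positivity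
        linarith
      linarith
    have hb2 : 0 ≤ (Real.exp (3 / ω) - Real.exp (-(3 / ω)))
        * Real.exp (-(Real.pi / (ω * h))) * (1 - Real.exp (-(Real.pi / (ω * h))))⁻¹ := by
      apply mul_nonneg (mul_nonneg hC0 hq0.le)
      rw [inv_nonneg]
      linarith
    calc ENNReal.ofReal (Real.exp (-3 / c₃) / 2)
          + (ENNReal.ofReal (1 - Real.exp (-(3 / ω)))
            + ENNReal.ofReal ((Real.exp (3 / ω) - Real.exp (-(3 / ω)))
                * Real.exp (-(Real.pi / (ω * h)))
                * (1 - Real.exp (-(Real.pi / (ω * h))))⁻¹))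
        = ENNReal.ofReal (Real.exp (-3 / c₃) / 2 + ((1 - Real.exp (-(3 / ω)))
            + (Real.exp (3 / ω) - Real.exp (-(3 / ω))) * Real.exp (-(Real.pi / (ω * h)))
              * (1 - Real.exp (-(Real.pi / (ω * h))))⁻¹)) := by
          rw [ENNReal.ofReal_add (by positivity) hB0, ENNReal.ofReal_add hb1 hb2]
      _ ≤ ENNReal.ofReal 1 := ENNReal.ofReal_le_ofReal hkey
      _ = expMeasure (1 / h) Set.univ := by rw [ENNReal.ofReal_one, measure_univ]
      _ = expMeasure (1 / h) S + expMeasure (1 / h) Sᶜ :=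
          (measure_add_measure_compl hSmeas).symm
      _ ≤ _ := by gcongr
  exact (ENNReal.add_le_add_iff_right (by finiteness)).1 hchain
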